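/- Let g ∈ 𝒢 with lift g̃ and let k ≥ 1 be a finite integer. A g_k-invariant set Z ⊆ Λ_k(g) is k-fold semi-monotone if and only if its image ι_k(Z) ⊆ Ω_k under the itinerary map is symbolic k-fold semi-monotone. -/

import Mathlib

open Set Filter Topology MeasureTheory Function
open scoped ENNReal Classical

noncomputable section

/-- The circle ℝ/ℤ. -/
abbrev Circle1 : Type := AddCircle (1 : ℝ)

/-- The k-fold cover ℝ/kℤ. -/
abbrev CircleK (k : ℕ) : Type := AddCircle ((k : ℝ))

/-- Projection ℝ → ℝ/ℤ. -/
def mk1 : ℝ → Circle1 := fun x => (x : Circle1)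

/-- Projection ℝ → ℝ/kℤ. -/
def mkk (k : ℕ) : ℝ → CircleK k := fun x => (x : CircleK k)

/-- Covering projection S_k → S¹ induced by the identity on ℝ. -/
def piK (k : ℕ) : CircleK k → Circle1 :=
  QuotientAddGroup.map (AddSubgroup.zmultiples ((k : ℕ) : ℝ)) (AddSubgroup.zmultiples (1 : ℝ))
    (AddMonoidHom.id ℝ)
    (by
      intro x hx
      obtain ⟨n, rfl⟩ := AddSubgroup.mem_zmultiples_iff.mp hx
      simp only [AddSubgroup.mem_comap, AddMonoidHom.id_apply]
      exact AddSubgroup.mem_zmultiples_iff.mpr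
        ⟨n * (k : ℤ), by push_cast [zsmul_eq_mul]; ring⟩)

/-- Deck transformation of S_k, induced by x ↦ x + 1. -/
def TK (k : ℕ) : CircleK k → CircleK k := fun x => x + mkk k 1

/-- Forward orbit of a point. -/
def fwdOrbit {X : Type*} (f : X → X) (x : X) : Set X := Set.range fun n : ℕ => f^[n] x

/-- A nonempty compact invariant set on which every forward orbit is dense. -/
def IsMinimalSet {X : Type*} [TopologicalSpace X] (f : X → X) (Z : Set X) : Prop :=
  Z.Nonempty ∧ IsCompact Z ∧ Set.MapsTo f Z Z ∧ ∀ z ∈ Z, Z ⊆ closure (fwdOrbit f z)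

/-- x = lim f^[n i] x along some sequence n i → ∞. -/
def IsRecurrentPt {X : Type*} [TopologicalSpace X] (f : X → X) (x : X) : Prop :=
  ∃ n : ℕ → ℕ, Tendsto n atTop atTop ∧ Tendsto (fun i => f^[n i] x) atTop (𝓝 x)

/-- The point x has rotation number ρ for the lift gt. -/
def HasPtRotNum (gt : ℝ → ℝ) (x ρ : ℝ) : Prop :=
  Tendsto (fun n : ℕ => (gt^[n] x - x) / n) atTop (𝓝 ρ)

/-- gt has rotation number ρ (the limit exists for all points and equals ρ). -/
def HasRotNum (gt : ℝ → ℝ) (ρ : ℝ) : Prop := ∀ x, HasPtRotNum gt x ρ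

/-- The rotation set of a lift. -/
def rotSet (gt : ℝ → ℝ) : Set ℝ := {ρ | ∃ x, HasPtRotNum gt x ρ}

/-- Continuous nondecreasing degree-one lift. -/
def IsSemiMonotoneLift (ht : ℝ → ℝ) : Prop :=
  Continuous ht ∧ Monotone ht ∧ ∀ x, ht (x + 1) = ht x + 1

/-- [a,b] is (a fundamental-domain representative of) a maximal nontrivial closed
arc on which the induced circle map is constant. -/
def IsFlatSpot (ht : ℝ → ℝ) (a b : ℝ) : Prop :=
  a < b ∧ b - a < 1 ∧ (∀ x ∈ Set.Icc a b, ht x = ht a) ∧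
    ∀ a' b', a' ≤ a → b ≤ b' → (∀ x ∈ Set.Icc a' b', ht x = ht a) → a' = a ∧ b' = b

/-- The left shift on one-sided sequences. -/
def shiftSeq {α : Type*} : (ℕ → α) → ℕ → α := fun s n => s (n + 1)

/-- Strict lexicographic order on one-sided sequences. -/
def lexLt {α : Type*} [LT α] (s t : ℕ → α) : Prop :=
  ∃ n, (∀ i, i < n → s i = t i) ∧ s n < t n

/-- Lexicographic order on one-sided sequences. -/
def lexLe {α : Type*} [LT α] (s t : ℕ → α) : Prop := s = t ∨ lexLt s t

/-- Reduction of every entry mod 2. -/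
def pihat : (ℕ → ℕ) → ℕ → ℕ := fun s n => s n % 2

/-- The sequence s has symbolic rotation number ω: the averages of the mod-2
reductions of its entries converge to ω. -/
def symbRot (s : ℕ → ℕ) (ω : ℝ) : Prop :=
  Tendsto (fun n : ℕ => (∑ i ∈ Finset.range (n + 1), ((s i % 2 : ℕ) : ℝ)) / (n + 1))
    atTop (𝓝 ω)

/-- Allowed transitions for Ω_k (entries mod 2k). -/
def transK (k : ℕ) (a c : ℕ) : Prop :=
  (Even a ∧ (c = a ∨ c = a + 1)) ∨ (Odd a ∧ (c = (a + 1) % (2 * k) ∨ c = (a + 2) % (2 * k)))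

/-- The subshift Ω_k ⊆ Σ⁺_{2k}. -/
def OmegaK (k : ℕ) : Set (ℕ → ℕ) :=
  {s | (∀ n, s n < 2 * k) ∧ ∀ n, transK k (s n) (s (n + 1))}

/-- Allowed transitions for Ω_∞. -/
def transZ (a c : ℤ) : Prop :=
  (Even a ∧ (c = a ∨ c = a + 1)) ∨ (Odd a ∧ (c = a + 1 ∨ c = a + 2))

/-- The subshift Ω_∞ ⊆ ℤ^ℕ. -/
def OmegaInf : Set (ℕ → ℤ) := {s | ∀ n, transZ (s n) (s (n + 1))}

/-- p̂_k : Ω_∞ → Ω_k, reduction of all entries mod 2k. -/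
def projK (k : ℕ) : (ℕ → ℤ) → ℕ → ℕ := fun s n => (s n % (2 * k : ℤ)).toNat

/-- A symbolic k-fold semi-monotone subset of Ω_k. -/
def SymbolicKfsm (k : ℕ) (Z : Set (ℕ → ℕ)) : Prop :=
  Z ⊆ OmegaK k ∧ Set.MapsTo shiftSeq Z Z ∧
    ∃ Z' : Set (ℕ → ℤ), Z' ⊆ OmegaInf ∧ Set.MapsTo shiftSeq Z' Z' ∧
      (fun s : ℕ → ℤ => fun n => s n + 2 * k) '' Z' = Z' ∧
      (∀ s ∈ Z', ∀ t ∈ Z', lexLe s t → lexLe (shiftSeq s) (shiftSeq t)) ∧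
      projK k '' Z' = Z

/-- The dynamical order interval ⟨a, b⟩. -/
def dynInterval (a b : ℕ → ℕ) : Set (ℕ → ℕ) :=
  {s | ∀ n, lexLe a (shiftSeq^[n] s) ∧ lexLe (shiftSeq^[n] s) b}

/-- The unique shift-invariant probability measure on the orbit of a periodic
point of period N: the uniform average of point masses along the orbit. -/
noncomputable def orbitMeasure (s : ℕ → ℕ) (N : ℕ) : Measure (ℕ → ℕ) :=
  (N : ℝ≥0∞)⁻¹ • ∑ i ∈ Finset.range N, Measure.dirac (shiftSeq^[i] s)

/-! ### The Hedlund–Morse construction -/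

/-- Partial sums ν₁ + ⋯ + ν_j. -/
def psum {k : ℕ} (ν : Fin k → ℝ) (j : ℕ) : ℝ := ∑ i : Fin k, if (i : ℕ) < j then ν i else 0

/-- An allowable HM parameter pair. -/
def HMAllowable {k : ℕ} (ω : ℝ) (ν : Fin k → ℝ) : Prop :=
  0 < ω ∧ ω < 1 ∧ (∀ i, 0 ≤ ν i) ∧ ∑ i, ν i = k * (1 - ω)

/-- Left endpoint of the HM address interval X_m. -/
def hmL {k : ℕ} (ω : ℝ) (ν : Fin k → ℝ) (m : ℕ) : ℝ :=
  if Even m then psum ν (m / 2) + ((m / 2 : ℕ) : ℝ) * ω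
  else psum ν (m / 2 + 1) + ((m / 2 : ℕ) : ℝ) * ω

/-- Right endpoint of the HM address interval X_m. -/
def hmR {k : ℕ} (ω : ℝ) (ν : Fin k → ℝ) (m : ℕ) : ℝ :=
  if Even m then psum ν (m / 2 + 1) + ((m / 2 : ℕ) : ℝ) * ω
  else psum ν (m / 2 + 1) + ((m / 2 + 1 : ℕ) : ℝ) * ω

/-- The HM address interval X_m ⊆ ℝ (a fundamental-domain representative). -/
def hmX {k : ℕ} (ω : ℝ) (ν : Fin k → ℝ) (m : ℕ) : Set ℝ := Set.Icc (hmL ω ν m) (hmR ω ν m)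

/-- Rigid rotation by ω on S_k. -/
def RotK (k : ℕ) (ω : ℝ) : CircleK k → CircleK k := fun x => x + mkk k ω

/-- The good set: points whose forward rotation orbit avoids all endpoints of the
address intervals. -/
def hmGood (k : ℕ) (ω : ℝ) (ν : Fin k → ℝ) : Set (CircleK k) :=
  {x | ∀ n : ℕ, ∀ m, m < 2 * k →
    (RotK k ω)^[n] x ≠ mkk k (hmL ω ν m) ∧ (RotK k ω)^[n] x ≠ mkk k (hmR ω ν m)}

/-- The address of a point of S_k (the index m with x ∈ X_m; junk value 0 if none). -/
noncomputable def hmAddr (k : ℕ) (ω : ℝ) (ν : Fin k → ℝ) (x : CircleK k) : ℕ :=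
  if h : ∃ m, m < 2 * k ∧ x ∈ mkk k '' hmX ω ν m then h.choose else 0

/-- The HM itinerary of a point of S_k. -/
noncomputable def hmZeta (k : ℕ) (ω : ℝ) (ν : Fin k → ℝ) (x : CircleK k) : ℕ → ℕ :=
  fun n => hmAddr k ω ν ((RotK k ω)^[n] x)

/-- B_k(ω,ν): the closure of the set of itineraries of good points. -/
noncomputable def hmB (k : ℕ) (ω : ℝ) (ν : Fin k → ℝ) : Set (ℕ → ℕ) :=
  closure (hmZeta k ω ν '' hmGood k ω ν)

/-- λ_k(ω,ν) = ζ_*(Leb)/k, where Leb is Lebesgue measure on S_k = [0,k). -/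
noncomputable def hmLambda (k : ℕ) (ω : ℝ) (ν : Fin k → ℝ) : Measure (ℕ → ℕ) :=
  (k : ℝ≥0∞)⁻¹ •
    ((((volume.restrict (Set.Ico (0 : ℝ) (k : ℝ))).map (mkk k)).restrict
        (hmGood k ω ν)).map (hmZeta k ω ν))

/-- The left cyclic shift τ on ℝ^k. -/
def cyc {k : ℕ} (ν : Fin k → ℝ) : Fin k → ℝ :=
  fun i => ν ⟨(i.val + 1) % k, Nat.mod_lt _ (Nat.lt_of_le_of_lt (Nat.zero_le _) i.isLt)⟩

/-- The Sturmian minimal set with rotation number ω. -/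
noncomputable def sturmianSet (ω : ℝ) : Set (ℕ → ℕ) :=
  if ω = 0 then {fun _ => 0}
  else if ω = 1 then {fun _ => 1}
  else hmB 1 ω fun _ => 1 - ω

/-! ### The class 𝒢 of bimodal degree-one circle maps -/

/-- Piecewise C² on [0,1]. -/
def PiecewiseC2 (f : ℝ → ℝ) : Prop :=
  ∃ (n : ℕ) (x : ℕ → ℝ), x 0 = 0 ∧ x n = 1 ∧ (∀ i, i < n → x i ≤ x (i + 1)) ∧
    ∀ i, i < n → ContDiffOn ℝ 2 f (Set.Ioo (x i) (x (i + 1)))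

/-- g : S¹ → S¹ belongs to the class 𝒢, with lift gt and turning point xmax. -/
structure GMap (g : Circle1 → Circle1) (gt : ℝ → ℝ) (xmax : ℝ) : Prop where
  cont : Continuous gt
  pw : PiecewiseC2 gt
  deg : ∀ x, gt (x + 1) = gt x + 1
  lift : ∀ x, g (mk1 x) = mk1 (gt x)
  xmax_pos : 0 < xmax
  xmax_lt_one : xmax < 1
  expand : ∀ x ∈ Set.Ioo (0 : ℝ) xmax, ∃ d, 1 < d ∧ HasDerivAt gt d x
  dec : ∀ x ∈ Set.Icc xmax 1, ∀ y ∈ Set.Icc xmax 1, x < y → gt y < gt x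
  low : 0 ≤ gt 0
  mid : gt 0 < gt xmax
  high : gt xmax ≤ xmax + 1

/-- The address intervals I_m ⊆ ℝ: I_{2j} = [j, zmax+j], I_{2j+1} = [zmin+j, xmax+j]. -/
def addrI (zmax zmin xmax : ℝ) (m : ℤ) : Set ℝ :=
  if Even m then Set.Icc ((m / 2 : ℤ) : ℝ) (zmax + ((m / 2 : ℤ) : ℝ))
  else Set.Icc (zmin + (((m - 1) / 2 : ℤ) : ℝ)) (xmax + (((m - 1) / 2 : ℤ) : ℝ))

/-- Λ_∞(g): points of ℝ whose forward gt-orbit stays in the address intervals. -/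
def LambdaInf (gt : ℝ → ℝ) (zmax zmin xmax : ℝ) : Set ℝ :=
  {x | ∀ n : ℕ, ∃ m : ℤ, gt^[n] x ∈ addrI zmax zmin xmax m}

/-- Λ_k(g): points of S_k whose forward g_k-orbit stays in I_0 ∪ ⋯ ∪ I_{2k-1}. -/
def LambdaK (k : ℕ) (gk : CircleK k → CircleK k) (zmax zmin xmax : ℝ) : Set (CircleK k) :=
  {x | ∀ n : ℕ, ∃ m : ℕ, m < 2 * k ∧ gk^[n] x ∈ mkk k '' addrI zmax zmin xmax (m : ℤ)}

/-- Λ₁(g): points of S¹ whose forward g-orbit stays in I₀ ∪ I₁. -/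
def Lambda1 (g : Circle1 → Circle1) (zmax zmin xmax : ℝ) : Set Circle1 :=
  {x | ∀ n : ℕ, g^[n] x ∈ mk1 '' Set.Icc 0 zmax ∪ mk1 '' Set.Icc zmin xmax}

/-- A k-fold semi-monotone subset of S_k: it has a lift Z' ⊆ ℝ that is
gt-invariant, invariant under x ↦ x + k, and on which gt is weakly order
preserving. -/
def PhysKfsmK (gt : ℝ → ℝ) (k : ℕ) (Z : Set (CircleK k)) : Prop :=
  ∃ Z' : Set ℝ, (∀ x ∈ Z', gt x ∈ Z') ∧ (fun x => x + (k : ℝ)) '' Z' = Z' ∧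
    (∀ x ∈ Z', ∀ y ∈ Z', x < y → gt x ≤ gt y) ∧ mkk k '' Z' = Z

/-- A k-fold semi-monotone subset of S¹. -/
def PhysKfsm1 (gt : ℝ → ℝ) (k : ℕ) (Z : Set Circle1) : Prop :=
  ∃ Z' : Set ℝ, (∀ x ∈ Z', gt x ∈ Z') ∧ (fun x => x + (k : ℝ)) '' Z' = Z' ∧
    (∀ x ∈ Z', ∀ y ∈ Z', x < y → gt x ≤ gt y) ∧ mk1 '' Z' = Z


/-- The positive-slope region P(h) in ℝ: the complement of the interiors of all
the (translated) flat spots. -/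
def flatComplR {l : ℕ} (a b : Fin l → ℝ) : Set ℝ :=
  {x | ∀ (i : Fin l) (n : ℤ), x ∉ Set.Ioo (a i + n) (b i + n)}

/-- The positive-slope region P(h) in the circle: the complement of the interiors
of the flat spots. -/
def flatComplC {l : ℕ} (a b : Fin l → ℝ) : Set Circle1 :=
  (⋃ i, mk1 '' Set.Ioo (a i) (b i))ᶜ

end

namespace Aux9

open Set

/-! ### Lexicographic order lemmas -/

theorem lexLt_irrefl {α : Type*} [Preorder α] (s : ℕ → α) : ¬ lexLt s s := by
  rintro ⟨n, -, h⟩; exact lt_irrefl _ h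

theorem lexLt_asymm {α : Type*} [Preorder α] {s t : ℕ → α}
    (h1 : lexLt s t) (h2 : lexLt t s) : False := by
  obtain ⟨n, hn, hlt⟩ := h1
  obtain ⟨m, hm, hlt'⟩ := h2
  rcases lt_trichotomy n m with h | h | h
  · exact (ne_of_lt hlt) ((hm n h).symm)
  · subst h; exact lt_irrefl _ (hlt.trans hlt')
  · exact (ne_of_lt hlt') ((hn m h).symm)

theorem lexLe_of_forall_le {α : Type*} [LinearOrder α] {s t : ℕ → α}
    (h : ∀ n, s n ≤ t n) : lexLe s t := by
  by_cases he : s = t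
  · exact Or.inl he
  · have hne : ∃ n, s n ≠ t n := by
      by_contra hc; push_neg at hc; exact he (funext hc)
    right
    refine ⟨Nat.find hne, fun i hi => ?_, lt_of_le_of_ne (h _) (Nat.find_spec hne)⟩
    have := Nat.find_min hne hi
    tauto

theorem lexLt_of_head {α : Type*} [Preorder α] {s t : ℕ → α} (h : s 0 < t 0) : lexLt s t :=
  ⟨0, fun i hi => absurd hi (Nat.not_lt_zero i), h⟩

/-! ### Address interval lemmas -/

variable {zmax zmin xmax : ℝ}

theorem addrI_even (j : ℤ) : addrI zmax zmin xmax (2*j) = Set.Icc (j : ℝ) (zmax + j) := by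
  have he : Even (2*j) := ⟨j, by ring⟩
  have h2 : (2*j)/2 = j := by omega
  rw [addrI, if_pos he, h2]

theorem addrI_odd (j : ℤ) : addrI zmax zmin xmax (2*j+1) = Set.Icc (zmin + (j:ℝ)) (xmax + j) := by
  have ho : ¬ Even (2*j+1) := by rw [Int.even_iff]; omega
  have h2 : (2*j+1-1)/2 = j := by omega
  rw [addrI, if_neg ho, h2]

theorem mem_addr_cases {x : ℝ} {m : ℤ} (h : x ∈ addrI zmax zmin xmax m) :
    ∃ j : ℤ, (m = 2*j ∧ (j:ℝ) ≤ x ∧ x ≤ zmax + j) ∨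
      (m = 2*j+1 ∧ zmin + (j:ℝ) ≤ x ∧ x ≤ xmax + j) := by
  obtain ⟨j, hj | hj⟩ : ∃ j : ℤ, m = 2*j ∨ m = 2*j+1 := ⟨m/2, by omega⟩
  · subst hj; rw [addrI_even] at h; exact ⟨j, Or.inl ⟨rfl, h.1, h.2⟩⟩
  · subst hj; rw [addrI_odd] at h; exact ⟨j, Or.inr ⟨rfl, h.1, h.2⟩⟩

theorem addr_sep (hz0 : 0 < zmax) (hz1 : zmax < zmin) (hz2 : zmin < xmax) (hx1 : xmax < 1)
    {x y : ℝ} {a b : ℤ} (hx : x ∈ addrI zmax zmin xmax a) (hy : y ∈ addrI zmax zmin xmax b)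
    (hab : a < b) : x < y := by
  obtain ⟨ja, ha⟩ := mem_addr_cases hx
  obtain ⟨jb, hb⟩ := mem_addr_cases hy
  rcases ha with ⟨rfl, h1, h2⟩ | ⟨rfl, h1, h2⟩ <;> rcases hb with ⟨rfl, g1, g2⟩ | ⟨rfl, g1, g2⟩
  · have : (ja:ℝ) + 1 ≤ jb := by exact_mod_cast (by omega : ja + 1 ≤ jb)
    linarith
  · have : (ja:ℝ) ≤ jb := by exact_mod_cast (by omega : ja ≤ jb)
    linarith
  · have : (ja:ℝ) + 1 ≤ jb := by exact_mod_cast (by omega : ja + 1 ≤ jb)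
    linarith
  · have : (ja:ℝ) + 1 ≤ jb := by exact_mod_cast (by omega : ja + 1 ≤ jb)
    linarith

theorem addr_unique (hz0 : 0 < zmax) (hz1 : zmax < zmin) (hz2 : zmin < xmax) (hx1 : xmax < 1)
    {x : ℝ} {a b : ℤ} (hx : x ∈ addrI zmax zmin xmax a) (hx' : x ∈ addrI zmax zmin xmax b) :
    a = b := by
  rcases lt_trichotomy a b with h | h | h
  · exact absurd (addr_sep hz0 hz1 hz2 hx1 hx hx' h) (lt_irrefl x)
  · exact h
  · exact absurd (addr_sep hz0 hz1 hz2 hx1 hx' hx h) (lt_irrefl x)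

theorem addr_le (hz0 : 0 < zmax) (hz1 : zmax < zmin) (hz2 : zmin < xmax) (hx1 : xmax < 1)
    {x y : ℝ} {a b : ℤ} (hx : x ∈ addrI zmax zmin xmax a) (hy : y ∈ addrI zmax zmin xmax b)
    (hxy : x ≤ y) : a ≤ b := by
  by_contra h
  push_neg at h
  exact absurd hxy (not_le.mpr (addr_sep hz0 hz1 hz2 hx1 hy hx h))

theorem mem_addrI_add {x : ℝ} {m : ℤ} (t : ℤ) (h : x ∈ addrI zmax zmin xmax m) :
    x + (t:ℝ) ∈ addrI zmax zmin xmax (m + 2*t) := by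
  obtain ⟨j, ⟨rfl, h1, h2⟩ | ⟨rfl, h1, h2⟩⟩ := mem_addr_cases h
  · have : 2*j + 2*t = 2*(j+t) := by ring
    rw [this, addrI_even]
    constructor <;> [skip; skip] <;> push_cast <;> linarith
  · have : 2*j+1 + 2*t = 2*(j+t)+1 := by ring
    rw [this, addrI_odd]
    constructor <;> [skip; skip] <;> push_cast <;> linarith

theorem addr_j (hz0 : 0 < zmax) (hz1 : zmax < zmin) (hz2 : zmin < xmax) (m : ℤ) :
    ∃ j : ℤ, addrI zmax zmin xmax m ⊆ Set.Icc (j:ℝ) (xmax + j) := by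
  obtain ⟨j, hj | hj⟩ : ∃ j : ℤ, m = 2*j ∨ m = 2*j+1 := ⟨m/2, by omega⟩
  · subst hj; rw [addrI_even]
    exact ⟨j, fun x hx => ⟨hx.1, by have := hx.2; linarith⟩⟩
  · subst hj; rw [addrI_odd]
    exact ⟨j, fun x hx => ⟨by have := hx.1; linarith, hx.2⟩⟩

end Aux9
namespace Aux9
open Set

/-! ### Lift lemmas -/

structure GtCtx (gt : ℝ → ℝ) (zmax zmin xmax : ℝ) : Prop where
  cont : Continuous gt
  deg : ∀ x, gt (x+1) = gt x + 1
  expand : ∀ x ∈ Set.Ioo (0:ℝ) xmax, ∃ d, 1 < d ∧ HasDerivAt gt d x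
  hz0 : 0 < zmax
  hz1 : zmax < zmin
  hz2 : zmin < xmax
  hx1 : xmax < 1
  hzmax : gt zmax = xmax
  hzmin : gt zmin = 1
  low : 0 ≤ gt 0
  high : gt xmax ≤ xmax + 1

variable {gt : ℝ → ℝ} {zmax zmin xmax : ℝ}

theorem GtCtx.hx0 (H : GtCtx gt zmax zmin xmax) : 0 < xmax :=
  lt_trans (lt_trans H.hz0 H.hz1) H.hz2

theorem gt_add_int (H : GtCtx gt zmax zmin xmax) (x : ℝ) (j : ℤ) : gt (x + j) = gt x + j := by
  have hdn : ∀ y : ℝ, gt (y - 1) = gt y - 1 := by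
    intro y
    have := H.deg (y - 1)
    rw [sub_add_cancel] at this
    linarith
  induction j using Int.induction_on with
  | zero => simp
  | succ n ih =>
    have : x + ((n:ℤ)+1 : ℤ) = (x + n) + 1 := by push_cast; ring
    rw [this, H.deg]
    push_cast
    push_cast at ih
    linarith
  | pred n ih =>
    have : x + (-(n:ℤ)-1 : ℤ) = (x + -(n:ℤ)) - 1 := by push_cast; ring
    rw [this, hdn]
    push_cast
    push_cast at ih
    linarith

theorem gt_iter_add_int (H : GtCtx gt zmax zmin xmax) (n : ℕ) (x : ℝ) (j : ℤ) :
    gt^[n] (x + j) = gt^[n] x + j := by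
  induction n generalizing x with
  | zero => simp
  | succ n ih =>
    rw [Function.iterate_succ_apply, Function.iterate_succ_apply, gt_add_int H, ih]

theorem phi_mono (H : GtCtx gt zmax zmin xmax) :
    StrictMonoOn (fun a => gt a - a) (Set.Icc 0 xmax) := by
  apply strictMonoOn_of_deriv_pos (convex_Icc 0 xmax)
    ((H.cont.sub continuous_id).continuousOn)
  intro x hx
  rw [interior_Icc] at hx
  obtain ⟨d, hd, hder⟩ := H.expand x hx
  have h2 : HasDerivAt (fun a => gt a - a) (d - 1) x := hder.sub (hasDerivAt_id x)
  have : deriv (gt - id) x = d - 1 := h2.deriv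
  rw [this]
  linarith

/-- Expansion on translated fundamental intervals. -/
theorem gt_expand_icc (H : GtCtx gt zmax zmin xmax) {j : ℤ} {a b : ℝ}
    (ha : a ∈ Set.Icc (j:ℝ) (xmax + j)) (hb : b ∈ Set.Icc (j:ℝ) (xmax + j)) (hab : a < b) :
    b - a < gt b - gt a := by
  have h1 : a - j ∈ Set.Icc (0:ℝ) xmax := ⟨by linarith [ha.1], by linarith [ha.2]⟩
  have h2 : b - j ∈ Set.Icc (0:ℝ) xmax := ⟨by linarith [hb.1], by linarith [hb.2]⟩
  have h3 := phi_mono H h1 h2 (by linarith)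
  have ea : gt a = gt (a - j) + j := by
    rw [← gt_add_int H (a - j) j, sub_add_cancel]
  have eb : gt b = gt (b - j) + j := by
    rw [← gt_add_int H (b - j) j, sub_add_cancel]
  simp only at h3
  linarith

theorem gt_mono_icc (H : GtCtx gt zmax zmin xmax) {j : ℤ} {a b : ℝ}
    (ha : a ∈ Set.Icc (j:ℝ) (xmax + j)) (hb : b ∈ Set.Icc (j:ℝ) (xmax + j)) (hab : a < b) :
    gt a < gt b := by
  have := gt_expand_icc H ha hb hab
  linarith

theorem gt_mono_icc_le (H : GtCtx gt zmax zmin xmax) {j : ℤ} {a b : ℝ}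
    (ha : a ∈ Set.Icc (j:ℝ) (xmax + j)) (hb : b ∈ Set.Icc (j:ℝ) (xmax + j)) (hab : a ≤ b) :
    gt a ≤ gt b := by
  rcases eq_or_lt_of_le hab with rfl | h
  · exact le_refl _
  · exact le_of_lt (gt_mono_icc H ha hb h)

/-- Strict monotonicity of gt on a single address interval. -/
theorem gt_lt_of_addr (H : GtCtx gt zmax zmin xmax) {m : ℤ} {a b : ℝ}
    (ha : a ∈ addrI zmax zmin xmax m) (hb : b ∈ addrI zmax zmin xmax m) (hab : a < b) :
    gt a < gt b := by
  obtain ⟨j, hj⟩ := addr_j H.hz0 H.hz1 H.hz2 m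
  exact gt_mono_icc H (hj ha) (hj hb) hab

/-- Values at translated marked points. -/
theorem gt_at_int (H : GtCtx gt zmax zmin xmax) (j : ℤ) : gt (j:ℝ) = gt 0 + j := by
  have := gt_add_int H 0 j; rwa [zero_add] at this

theorem gt_at_zmax (H : GtCtx gt zmax zmin xmax) (j : ℤ) : gt (zmax + j) = xmax + j := by
  rw [gt_add_int H, H.hzmax]

theorem gt_at_zmin (H : GtCtx gt zmax zmin xmax) (j : ℤ) : gt (zmin + j) = 1 + j := by
  rw [gt_add_int H, H.hzmin]

theorem gt_at_xmax (H : GtCtx gt zmax zmin xmax) (j : ℤ) : gt (xmax + j) = gt xmax + j := by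
  rw [gt_add_int H]

end Aux9
namespace Aux9
open Set

variable {gt : ℝ → ℝ} {zmax zmin xmax : ℝ}

/-- The key Markov transition lemma: if x and gt x are both in address intervals,
the pair of addresses is an allowed transition. -/
theorem trans_lemma (H : GtCtx gt zmax zmin xmax) {x : ℝ} {a c : ℤ}
    (hx : x ∈ addrI zmax zmin xmax a) (hgx : gt x ∈ addrI zmax zmin xmax c) :
    transZ a c := by
  have hz0 := H.hz0; have hz1 := H.hz1; have hz2 := H.hz2; have hx1 := H.hx1
  have hzx : zmax < xmax := lt_trans hz1 hz2
  have hzminpos : 0 < zmin := lt_trans hz0 hz1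
  obtain ⟨j, ⟨rfl, h1, h2⟩ | ⟨rfl, h1, h2⟩⟩ := mem_addr_cases hx
  · -- even case : x ∈ [j, zmax+j]
    have hmemx : x ∈ Set.Icc (j:ℝ) (xmax + j) := ⟨h1, by linarith⟩
    have hmemj : (j:ℝ) ∈ Set.Icc (j:ℝ) (xmax + j) := ⟨le_refl _, by linarith [H.hx0]⟩
    have hmemz : zmax + (j:ℝ) ∈ Set.Icc (j:ℝ) (xmax + j) := ⟨by linarith, by linarith⟩
    have hlow : (j:ℝ) ≤ gt x := by
      have := gt_mono_icc_le H hmemj hmemx h1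
      rw [gt_at_int H] at this
      linarith [H.low]
    have hhigh : gt x ≤ xmax + j := by
      have := gt_mono_icc_le H hmemx hmemz h2
      rwa [gt_at_zmax H] at this
    obtain ⟨j', ⟨rfl, g1, g2⟩ | ⟨rfl, g1, g2⟩⟩ := mem_addr_cases hgx
    · -- target even
      have hjj : j' = j := by
        by_contra hne
        rcases lt_or_gt_of_ne hne with h | h
        · have : (j':ℝ) + 1 ≤ j := by exact_mod_cast (by omega : j' + 1 ≤ j)
          linarith
        · have : (j:ℝ) + 1 ≤ j' := by exact_mod_cast (by omega : j + 1 ≤ j')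
          linarith
      exact Or.inl ⟨⟨j, by ring⟩, Or.inl (by omega)⟩
    · -- target odd
      have hjj : j' = j := by
        by_contra hne
        rcases lt_or_gt_of_ne hne with h | h
        · have : (j':ℝ) + 1 ≤ j := by exact_mod_cast (by omega : j' + 1 ≤ j)
          linarith
        · have : (j:ℝ) + 1 ≤ j' := by exact_mod_cast (by omega : j + 1 ≤ j')
          linarith
      exact Or.inl ⟨⟨j, by ring⟩, Or.inr (by omega)⟩
  · -- odd case : x ∈ [zmin+j, xmax+j]
    have hmemx : x ∈ Set.Icc (j:ℝ) (xmax + j) := ⟨by linarith, h2⟩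
    have hmemzl : zmin + (j:ℝ) ∈ Set.Icc (j:ℝ) (xmax + j) := ⟨by linarith, by linarith⟩
    have hmemxm : xmax + (j:ℝ) ∈ Set.Icc (j:ℝ) (xmax + j) := ⟨by linarith [H.hx0], le_refl _⟩
    have hlow : 1 + (j:ℝ) ≤ gt x := by
      have := gt_mono_icc_le H hmemzl hmemx h1
      rwa [gt_at_zmin H] at this
    have hhigh : gt x ≤ xmax + 1 + j := by
      have := gt_mono_icc_le H hmemx hmemxm h2
      rw [gt_at_xmax H] at this
      linarith [H.high]
    obtain ⟨j', ⟨rfl, g1, g2⟩ | ⟨rfl, g1, g2⟩⟩ := mem_addr_cases hgx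
    · -- target even : claim j' = j + 1
      have hjj : j' = j + 1 := by
        by_contra hne
        rcases lt_or_gt_of_ne hne with h | h
        · have : (j':ℝ) ≤ j := by exact_mod_cast (by omega : j' ≤ j)
          linarith
        · have : (j:ℝ) + 2 ≤ j' := by exact_mod_cast (by omega : j + 2 ≤ j')
          linarith
      exact Or.inr ⟨⟨j, by ring⟩, Or.inl (by omega)⟩
    · -- target odd : claim j' = j + 1
      have hjj : j' = j + 1 := by
        by_contra hne
        rcases lt_or_gt_of_ne hne with h | h
        · have : (j':ℝ) ≤ j := by exact_mod_cast (by omega : j' ≤ j)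
          linarith
        · have : (j:ℝ) + 2 ≤ j' := by exact_mod_cast (by omega : j + 2 ≤ j')
          linarith
      exact Or.inr ⟨⟨j, by ring⟩, Or.inr (by omega)⟩

/-! ### Integer itineraries -/

/-- The integer address of a point of ℝ (junk value 0 if in no interval). -/
noncomputable def iaddr (zmax zmin xmax : ℝ) (x : ℝ) : ℤ :=
  if h : ∃ m : ℤ, x ∈ addrI zmax zmin xmax m then h.choose else 0

theorem iaddr_eq (hz0 : 0 < zmax) (hz1 : zmax < zmin) (hz2 : zmin < xmax) (hx1 : xmax < 1)
    {x : ℝ} {m : ℤ} (h : x ∈ addrI zmax zmin xmax m) : iaddr zmax zmin xmax x = m := by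
  rw [iaddr, dif_pos ⟨m, h⟩]
  exact addr_unique hz0 hz1 hz2 hx1 (⟨m, h⟩ : ∃ m : ℤ, x ∈ addrI zmax zmin xmax m).choose_spec h

/-- The integer itinerary of a point of ℝ. -/
noncomputable def itin (gt : ℝ → ℝ) (zmax zmin xmax : ℝ) (x : ℝ) : ℕ → ℤ :=
  fun n => iaddr zmax zmin xmax (gt^[n] x)

/-! ### The expansion contradiction -/

theorem expansion_contra (H : GtCtx gt zmax zmin xmax)
    {u v : ℝ} (huv : u < v) {m : ℕ → ℤ}
    (hu : ∀ n, gt^[n] u ∈ addrI zmax zmin xmax (m n))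
    (hv : ∀ n, gt^[n] v ∈ addrI zmax zmin xmax (m n)) : False := by
  have hx0 := H.hx0
  choose jf hjf using fun n => addr_j H.hz0 H.hz1 H.hz2 (m n)
  set ψ : ℝ → ℝ := fun a => gt a - a with hψdef
  have hψm : StrictMonoOn ψ (Set.Icc 0 xmax) := phi_mono H
  have hψtr : ∀ (w : ℝ) (j : ℤ), ψ (w + j) = ψ w := by
    intro w j
    simp only [hψdef, gt_add_int H]
    ring
  set δ : ℝ := v - u with hδdef
  have hδpos : 0 < δ := by rw [hδdef]; linarith
  set gap : ℕ → ℝ := fun n => gt^[n] v - gt^[n] u with hgapdef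
  have hbound : ∀ n, gap n ≤ xmax := by
    intro n
    have h1 := hjf n (hu n)
    have h2 := hjf n (hv n)
    simp only [hgapdef]
    linarith [h1.1, h2.2]
  have hδx : δ ≤ xmax := by
    have h0 := hbound 0
    simp only [hgapdef, Function.iterate_zero, id_eq] at h0
    rw [hδdef]
    exact h0
  -- minimum of the expansion increment
  have hne : (Set.Icc (0:ℝ) (xmax - δ)).Nonempty := ⟨0, le_refl _, by linarith⟩
  obtain ⟨a₀, ha₀, hmin⟩ := isCompact_Icc.exists_isMinOn hne
    (((H.cont.sub continuous_id).comp (continuous_id.add continuous_const)).sub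
      (H.cont.sub continuous_id)).continuousOn
      (f := fun a => ψ (a + δ) - ψ a)
  set c : ℝ := ψ (a₀ + δ) - ψ a₀ with hcdef
  have hcpos : 0 < c := by
    have h1 : a₀ ∈ Set.Icc (0:ℝ) xmax := ⟨ha₀.1, by linarith [ha₀.2]⟩
    have h2 : a₀ + δ ∈ Set.Icc (0:ℝ) xmax := ⟨by linarith [ha₀.1], by linarith [ha₀.2]⟩
    have := hψm h1 h2 (by linarith)
    simp only [hcdef]
    linarith
  have key : ∀ n, δ + n * c ≤ gap n := by
    intro n
    induction n with
    | zero => simp [hgapdef, hδdef]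
    | succ n ih =>
      have hnc : (0:ℝ) ≤ n * c := by positivity
      have hgd : δ ≤ gap n := by linarith
      set un := gt^[n] u with hun
      set vn := gt^[n] v with hvn
      have hju := hjf n (hu n)
      have hjv := hjf n (hv n)
      set j := jf n with hj
      set a : ℝ := un - j with hadef
      set b : ℝ := vn - j with hbdef
      have haI : a ∈ Set.Icc (0:ℝ) xmax :=
        ⟨by rw [hadef]; linarith [hju.1], by rw [hadef]; linarith [hju.2]⟩
      have hbI : b ∈ Set.Icc (0:ℝ) xmax :=
        ⟨by rw [hbdef]; linarith [hjv.1], by rw [hbdef]; linarith [hjv.2]⟩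
      have hba : b - a = gap n := by rw [hadef, hbdef, hgapdef]; ring
      have haA : a ∈ Set.Icc (0:ℝ) (xmax - δ) := ⟨haI.1, by linarith [hbI.2]⟩
      have step1 : c ≤ ψ (a + δ) - ψ a := isMinOn_iff.mp hmin a haA
      have step2 : ψ (a + δ) ≤ ψ b := by
        rcases eq_or_lt_of_le (by linarith : a + δ ≤ b) with h | h
        · rw [h]
        · exact le_of_lt (hψm ⟨by linarith [haI.1], by linarith [hbI.2]⟩ hbI h)
      have hgap1 : gap (n+1) = gap n + (ψ b - ψ a) := by
        have e3 : ψ vn = ψ b := by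
          rw [show vn = b + (j:ℝ) by rw [hbdef]; ring, hψtr]
        have e4 : ψ un = ψ a := by
          rw [show un = a + (j:ℝ) by rw [hadef]; ring, hψtr]
        have e1 : gap (n+1) = gt vn - gt un := by
          simp only [hgapdef, Function.iterate_succ_apply', hun, hvn]
        rw [e1, ← e3, ← e4]
        simp only [hψdef, hgapdef]
        ring
      rw [hgap1]
      push_cast
      linarith
  obtain ⟨N, hN⟩ := exists_nat_gt ((xmax - δ) / c)
  have h1 : xmax - δ < N * c := by
    rw [div_lt_iff₀ hcpos] at hN
    linarith
  have := key N
  have := hbound N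
  linarith

end Aux9
namespace Aux9
open Set

private theorem small_mult {K d δ : ℤ} (hK : 2 ≤ K) (h : K * d = δ)
    (h1 : -1 ≤ δ) (h2 : δ ≤ 1) : δ = 0 := by
  rcases lt_trichotomy d 0 with hd | hd | hd
  · have hd1 : d ≤ -1 := by omega
    nlinarith
  · subst hd; omega
  · have hd1 : 1 ≤ d := by omega
    nlinarith

/-- Two transition-allowed integer sequences with the same reduction mod 2k differ
by a constant. -/
theorem seq_rigid {k : ℕ} (hk : 1 ≤ k) {s t : ℕ → ℤ}
    (hs : ∀ n, transZ (s n) (s (n+1))) (ht : ∀ n, transZ (t n) (t (n+1)))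
    (hmod : ∀ n, s n % (2*(k:ℤ)) = t n % (2*(k:ℤ))) :
    ∀ n, s n - t n = s 0 - t 0 := by
  have hK : (2:ℤ) ≤ 2*(k:ℤ) := by
    have : (1:ℤ) ≤ (k:ℤ) := by exact_mod_cast hk
    linarith
  have hdvd : ∀ n, ∃ q : ℤ, s n - t n = 2*(k:ℤ) * q := by
    intro n
    have h0 : (s n - t n) % (2*(k:ℤ)) = 0 :=
      Int.emod_emod_of_dvd _ (dvd_refl _) ▸ (Int.emod_eq_emod_iff_emod_sub_eq_zero.mp (hmod n))
    exact Int.dvd_of_emod_eq_zero h0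
  intro n
  induction n with
  | zero => rfl
  | succ n ih =>
    obtain ⟨q, hq⟩ := hdvd n
    obtain ⟨q', hq'⟩ := hdvd (n+1)
    -- parities agree
    have hpar : s n % 2 = t n % 2 := by
      have heven : ∃ w : ℤ, s n - t n = w + w := ⟨(k:ℤ)*q, by rw [hq]; ring⟩
      obtain ⟨w, hw⟩ := heven
      omega
    have hKq : 2*(k:ℤ) * (q' - q) = (s (n+1) - t (n+1)) - (s n - t n) := by
      rw [hq, hq']; ring
    rcases hs n with ⟨⟨r, hr⟩, h1 | h1⟩ | ⟨⟨r, hr⟩, h1 | h1⟩ <;>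
      rcases ht n with ⟨⟨u, hu⟩, g1 | g1⟩ | ⟨⟨u, hu⟩, g1 | g1⟩ <;>
      [skip; skip; (exact absurd hpar (by omega)); (exact absurd hpar (by omega));
       skip; skip; (exact absurd hpar (by omega)); (exact absurd hpar (by omega));
       (exact absurd hpar (by omega)); (exact absurd hpar (by omega)); skip; skip;
       (exact absurd hpar (by omega)); (exact absurd hpar (by omega)); skip; skip] <;>
    all_goals {
      have hδ := small_mult hK hKq (by omega) (by omega)
      omega
    }

end Aux9
namespace Aux9
open Set

theorem transZ_transK {k : ℕ} (hk : 1 ≤ k) {a c : ℤ} (h : transZ a c) :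
    transK k (a % (2*(k:ℤ))).toNat (c % (2*(k:ℤ))).toNat := by
  have hKpos : (0:ℤ) < 2*(k:ℤ) := by positivity
  have hK2 : (2:ℤ) ≤ 2*(k:ℤ) := by
    have : (1:ℤ) ≤ (k:ℤ) := by exact_mod_cast hk
    linarith
  have hA0 : 0 ≤ a % (2*(k:ℤ)) := Int.emod_nonneg a (ne_of_gt hKpos)
  have hA1 : a % (2*(k:ℤ)) < 2*(k:ℤ) := Int.emod_lt_of_pos a hKpos
  have hC0 : 0 ≤ c % (2*(k:ℤ)) := Int.emod_nonneg c (ne_of_gt hKpos)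
  have hC1 : c % (2*(k:ℤ)) < 2*(k:ℤ) := Int.emod_lt_of_pos c hKpos
  -- A % 2k has the same parity as a
  have hApar : a % (2*(k:ℤ)) % 2 = a % 2 := by
    conv_rhs => rw [← Int.emod_emod_of_dvd a (by exact ⟨(k:ℤ), by ring⟩ : (2:ℤ) ∣ 2*(k:ℤ))]
  have hCsucc : ∀ b : ℤ, (b + 1) % (2*(k:ℤ)) = (b % (2*(k:ℤ)) + 1) % (2*(k:ℤ)) := by
    intro b
    rw [Int.emod_add_emod]
  have hCsucc2 : ∀ b : ℤ, (b + 2) % (2*(k:ℤ)) = (b % (2*(k:ℤ)) + 2) % (2*(k:ℤ)) := by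
    intro b
    rw [Int.emod_add_emod]
  rcases h with ⟨⟨r, hr⟩, hc | hc⟩ | ⟨⟨r, hr⟩, hc | hc⟩
  · -- even, c = a
    subst hc
    exact Or.inl ⟨by
      rw [Nat.even_iff]
      omega, Or.inl rfl⟩
  · -- even, c = a + 1
    subst hc
    have heA : a % (2*(k:ℤ)) % 2 = 0 := by omega
    have hlt : a % (2*(k:ℤ)) + 1 < 2*(k:ℤ) := by omega
    have : (a + 1) % (2*(k:ℤ)) = a % (2*(k:ℤ)) + 1 := by
      rw [hCsucc a, Int.emod_eq_of_lt (by omega) hlt]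
    left
    constructor
    · rw [Nat.even_iff]; omega
    · right; omega
  · -- odd, c = a + 1
    subst hc
    have hoA : a % (2*(k:ℤ)) % 2 = 1 := by omega
    right
    constructor
    · rw [Nat.odd_iff]; omega
    · left
      rcases lt_or_eq_of_le (by omega : a % (2*(k:ℤ)) + 1 ≤ 2*(k:ℤ)) with hlt | heq
      · have h1 : (a + 1) % (2*(k:ℤ)) = a % (2*(k:ℤ)) + 1 := by
          rw [hCsucc a, Int.emod_eq_of_lt (by omega) hlt]
        have h2 : ((a % (2*(k:ℤ))).toNat + 1) % (2*k) = (a % (2*(k:ℤ))).toNat + 1 := by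
          apply Nat.mod_eq_of_lt
          omega
        omega
      · -- a % 2k = 2k - 1
        have h1 : (a + 1) % (2*(k:ℤ)) = 0 := by
          rw [hCsucc a, heq, Int.emod_self]
        have h2 : ((a % (2*(k:ℤ))).toNat + 1) % (2*k) = 0 := by
          have : (a % (2*(k:ℤ))).toNat + 1 = 2*k := by omega
          rw [this, Nat.mod_self]
        omega
  · -- odd, c = a + 2
    subst hc
    have hoA : a % (2*(k:ℤ)) % 2 = 1 := by omega
    right
    constructor
    · rw [Nat.odd_iff]; omega
    · right
      rcases lt_or_eq_of_le (by omega : a % (2*(k:ℤ)) + 2 ≤ 2*(k:ℤ) + 1) with hlt | heq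
      · have hlt2 : a % (2*(k:ℤ)) + 2 < 2*(k:ℤ) := by omega
        have h1 : (a + 2) % (2*(k:ℤ)) = a % (2*(k:ℤ)) + 2 := by
          rw [hCsucc2 a, Int.emod_eq_of_lt (by omega) hlt2]
        have h2 : ((a % (2*(k:ℤ))).toNat + 2) % (2*k) = (a % (2*(k:ℤ))).toNat + 2 := by
          apply Nat.mod_eq_of_lt
          omega
        omega
      · -- a % 2k = 2k - 1, so (a+2) % 2k = 1
        have h1 : (a + 2) % (2*(k:ℤ)) = 1 := by
          rw [hCsucc2 a, show a % (2*(k:ℤ)) + 2 = 1 + 2*(k:ℤ)*1 by omega,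
            Int.add_mul_emod_self_left, Int.emod_eq_of_lt (by omega) (by omega)]
        have h2 : ((a % (2*(k:ℤ))).toNat + 2) % (2*k) = 1 := by
          have he : (a % (2*(k:ℤ))).toNat + 2 = 1 + 1*(2*k) := by omega
          rw [he, Nat.add_mul_mod_self_right]
          exact Nat.mod_eq_of_lt (by omega)
        omega

end Aux9
namespace Aux9
open Set

variable {gt : ℝ → ℝ} {zmax zmin xmax : ℝ}

theorem mkk_eq_iff {k : ℕ} {x y : ℝ} : mkk k x = mkk k y ↔ ∃ t : ℤ, x = y + t * k := by
  show (x : CircleK k) = (y : CircleK k) ↔ _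
  rw [QuotientAddGroup.eq_iff_sub_mem, AddSubgroup.mem_zmultiples_iff]
  constructor
  · rintro ⟨t, ht⟩
    rw [zsmul_eq_mul] at ht
    exact ⟨t, by linarith⟩
  · rintro ⟨t, ht⟩
    exact ⟨t, by rw [zsmul_eq_mul]; linarith⟩

theorem gk_iter {k : ℕ} (gk : CircleK k → CircleK k)
    (hgk : ∀ x : ℝ, gk (mkk k x) = mkk k (gt x)) (n : ℕ) (x : ℝ) :
    gk^[n] (mkk k x) = mkk k (gt^[n] x) := by
  induction n generalizing x with
  | zero => rfl
  | succ n ih =>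
    rw [Function.iterate_succ_apply, Function.iterate_succ_apply, hgk, ih]

theorem itin_shift (x : ℝ) :
    shiftSeq (itin gt zmax zmin xmax x) = itin gt zmax zmin xmax (gt x) := by
  funext n
  show itin gt zmax zmin xmax x (n+1) = _
  simp only [itin, Function.iterate_succ_apply]

theorem itin_spec (H : GtCtx gt zmax zmin xmax) {k : ℕ} (hk : 1 ≤ k)
    (gk : CircleK k → CircleK k) (hgk : ∀ x : ℝ, gk (mkk k x) = mkk k (gt x))
    (ιk : CircleK k → ℕ → ℕ)
    (hιk : ∀ x ∈ LambdaK k gk zmax zmin xmax, ∀ n : ℕ,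
      ιk x n < 2 * k ∧ gk^[n] x ∈ mkk k '' addrI zmax zmin xmax ((ιk x n : ℕ) : ℤ))
    {x : ℝ} (hx : mkk k x ∈ LambdaK k gk zmax zmin xmax) (n : ℕ) :
    gt^[n] x ∈ addrI zmax zmin xmax (itin gt zmax zmin xmax x n) ∧
      ((itin gt zmax zmin xmax x n) % (2*(k:ℤ))).toNat = ιk (mkk k x) n := by
  obtain ⟨hlt, himg⟩ := hιk (mkk k x) hx n
  obtain ⟨w, hw, hww⟩ := himg
  rw [gk_iter gk hgk] at hww
  obtain ⟨t, ht⟩ := mkk_eq_iff.mp hww.symm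
  have hmem : gt^[n] x ∈ addrI zmax zmin xmax ((ιk (mkk k x) n : ℤ) + 2*(t*(k:ℤ))) := by
    have h2 := mem_addrI_add (t*(k:ℤ)) hw
    have h3 : gt^[n] x = w + ((t*(k:ℤ) : ℤ) : ℝ) := by rw [ht]; push_cast; ring
    rwa [← h3] at h2
  have hia : itin gt zmax zmin xmax x n = (ιk (mkk k x) n : ℤ) + 2*(t*(k:ℤ)) :=
    iaddr_eq H.hz0 H.hz1 H.hz2 H.hx1 hmem
  refine ⟨by rw [hia]; exact hmem, ?_⟩
  · rw [hia]
    have e1 : (ιk (mkk k x) n : ℤ) + 2*(t*(k:ℤ)) = (ιk (mkk k x) n : ℤ) + (2*(k:ℤ))*t := by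
      ring
    rw [e1, Int.add_mul_emod_self_left, Int.emod_eq_of_lt (by positivity)
      (by exact_mod_cast hlt), Int.toNat_natCast]

theorem itin_add (H : GtCtx gt zmax zmin xmax) {x : ℝ}
    (hx : ∀ n, ∃ m : ℤ, gt^[n] x ∈ addrI zmax zmin xmax m) (t : ℤ) :
    itin gt zmax zmin xmax (x + (t:ℝ)) = fun n => itin gt zmax zmin xmax x n + 2*t := by
  funext n
  obtain ⟨m, hm⟩ := hx n
  have h1 : gt^[n] (x + (t:ℝ)) = gt^[n] x + (t:ℝ) := gt_iter_add_int H n x t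
  have h2 := mem_addrI_add t hm
  show iaddr zmax zmin xmax (gt^[n] (x + (t:ℝ))) = iaddr zmax zmin xmax (gt^[n] x) + 2*t
  rw [h1, iaddr_eq H.hz0 H.hz1 H.hz2 H.hx1 h2, iaddr_eq H.hz0 H.hz1 H.hz2 H.hx1 hm]

theorem itin_mem (H : GtCtx gt zmax zmin xmax) {x : ℝ}
    (hx : ∀ n, ∃ m : ℤ, gt^[n] x ∈ addrI zmax zmin xmax m) (n : ℕ) :
    gt^[n] x ∈ addrI zmax zmin xmax (itin gt zmax zmin xmax x n) := by
  obtain ⟨m, hm⟩ := hx n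
  show gt^[n] x ∈ addrI zmax zmin xmax (iaddr zmax zmin xmax (gt^[n] x))
  rw [iaddr_eq H.hz0 H.hz1 H.hz2 H.hx1 hm]
  exact hm

theorem itin_trans (H : GtCtx gt zmax zmin xmax) {x : ℝ}
    (hx : ∀ n, ∃ m : ℤ, gt^[n] x ∈ addrI zmax zmin xmax m) (n : ℕ) :
    transZ (itin gt zmax zmin xmax x n) (itin gt zmax zmin xmax x (n+1)) := by
  have h1 := itin_mem H hx n
  have h2 := itin_mem H hx (n+1)
  rw [Function.iterate_succ_apply'] at h2
  exact trans_lemma H h1 h2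

theorem mkk_surj {k : ℕ} (z : CircleK k) : ∃ x : ℝ, mkk k x = z := Quotient.exists_rep z

end Aux9
/-- A g_k-invariant subset of Λ_k(g) is k-fold semi-monotone if
and only if its itinerary image is symbolic k-fold semi-monotone. -/
theorem statement9
    (g : Circle1 → Circle1) (gt : ℝ → ℝ) (xmax : ℝ) (hG : GMap g gt xmax)
    (zmax zmin : ℝ) (hz0 : 0 < zmax) (hz1 : zmax < zmin) (hz2 : zmin < xmax)
    (hzmax : gt zmax = xmax) (hzmin : gt zmin = 1)
    (k : ℕ) (hk : 1 ≤ k)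
    (gk : CircleK k → CircleK k) (hgk : ∀ x : ℝ, gk (mkk k x) = mkk k (gt x))
    (ιk : CircleK k → ℕ → ℕ)
    (hιk : ∀ x ∈ LambdaK k gk zmax zmin xmax, ∀ n : ℕ,
      ιk x n < 2 * k ∧ gk^[n] x ∈ mkk k '' addrI zmax zmin xmax ((ιk x n : ℕ) : ℤ))
    (Z : Set (CircleK k)) (hZsub : Z ⊆ LambdaK k gk zmax zmin xmax)
    (hZinv : Set.MapsTo gk Z Z) :
    PhysKfsmK gt k Z ↔ SymbolicKfsm k (ιk '' Z) := by
  classical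
  have H : Aux9.GtCtx gt zmax zmin xmax :=
    ⟨hG.cont, hG.deg, hG.expand, hz0, hz1, hz2, hG.xmax_lt_one, hzmax, hzmin, hG.low, hG.high⟩
  -- existence of itineraries for lifts of LambdaK points
  have hex : ∀ x : ℝ, mkk k x ∈ LambdaK k gk zmax zmin xmax →
      ∀ n, ∃ m : ℤ, gt^[n] x ∈ addrI zmax zmin xmax m := by
    intro x hx n
    exact ⟨(Aux9.itin gt zmax zmin xmax) x n, (Aux9.itin_spec H hk gk hgk ιk hιk hx n).1⟩
  have hprojit : ∀ x : ℝ, mkk k x ∈ LambdaK k gk zmax zmin xmax →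
      projK k ((Aux9.itin gt zmax zmin xmax) x) = ιk (mkk k x) := by
    intro x hx
    funext n
    exact (Aux9.itin_spec H hk gk hgk ιk hιk hx n).2
  constructor
  · -- physical kfsm → symbolic kfsm
    rintro ⟨Z', hinv, hplus, hord, himg⟩
    have hmemZ : ∀ x ∈ Z', mkk k x ∈ Z := by
      intro x hx; rw [← himg]; exact ⟨x, hx, rfl⟩
    have hmemL : ∀ x ∈ Z', mkk k x ∈ LambdaK k gk zmax zmin xmax :=
      fun x hx => hZsub (hmemZ x hx)
    have hexZ : ∀ x ∈ Z', ∀ n, ∃ m : ℤ, gt^[n] x ∈ addrI zmax zmin xmax m :=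
      fun x hx => hex x (hmemL x hx)
    have hiter : ∀ x ∈ Z', ∀ n, gt^[n] x ∈ Z' := by
      intro x hx n
      induction n with
      | zero => simpa using hx
      | succ n ih => rw [Function.iterate_succ_apply']; exact hinv _ ih
    have hordle : ∀ x ∈ Z', ∀ y ∈ Z', x ≤ y → gt x ≤ gt y := by
      intro x hx y hy hxy
      rcases eq_or_lt_of_le hxy with rfl | h
      · exact le_refl _
      · exact hord x hx y hy h
    have horditer : ∀ x ∈ Z', ∀ y ∈ Z', x ≤ y → ∀ n, gt^[n] x ≤ gt^[n] y := by
      intro x hx y hy hxy n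
      induction n with
      | zero => simpa using hxy
      | succ n ih =>
        rw [Function.iterate_succ_apply', Function.iterate_succ_apply']
        exact hordle _ (hiter x hx n) _ (hiter y hy n) ih
    have hptwise : ∀ x ∈ Z', ∀ y ∈ Z', x ≤ y → ∀ n, (Aux9.itin gt zmax zmin xmax) x n ≤ (Aux9.itin gt zmax zmin xmax) y n := by
      intro x hx y hy hxy n
      exact Aux9.addr_le hz0 hz1 hz2 H.hx1 (Aux9.itin_mem H (hexZ x hx) n)
        (Aux9.itin_mem H (hexZ y hy) n) (horditer x hx y hy hxy n)
    refine ⟨?_, ?_, (Aux9.itin gt zmax zmin xmax) '' Z', ?_, ?_, ?_, ?_, ?_⟩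
    · -- ιk '' Z ⊆ OmegaK k
      rintro s ⟨z, hz, rfl⟩
      obtain ⟨x, hxZ, rfl⟩ : z ∈ mkk k '' Z' := by rw [himg]; exact hz
      constructor
      · intro n; exact (hιk _ (hmemL x hxZ) n).1
      · intro n
        have htr := Aux9.transZ_transK hk (Aux9.itin_trans H (hexZ x hxZ) n)
        have hp := hprojit x (hmemL x hxZ)
        rw [← hp]
        exact htr
    · -- shift invariance of ιk '' Z
      rintro s ⟨z, hz, rfl⟩
      obtain ⟨x, hxZ, rfl⟩ : z ∈ mkk k '' Z' := by rw [himg]; exact hz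
      refine ⟨gk (mkk k x), hZinv hz, ?_⟩
      have hgkz : gk (mkk k x) = mkk k (gt x) := hgk x
      rw [hgkz]
      have hL2 : mkk k (gt x) ∈ LambdaK k gk zmax zmin xmax :=
        hZsub (by rw [← hgkz]; exact hZinv hz)
      rw [← hprojit (gt x) hL2, ← hprojit x (hmemL x hxZ), ← Aux9.itin_shift x]
      rfl
    · -- (Aux9.itin gt zmax zmin xmax) '' Z' ⊆ OmegaInf
      rintro s ⟨x, hx, rfl⟩ n
      exact Aux9.itin_trans H (hexZ x hx) n
    · -- shift invariance
      rintro s ⟨x, hx, rfl⟩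
      exact ⟨gt x, hinv x hx, (Aux9.itin_shift x).symm⟩
    · -- translation invariance
      ext s
      constructor
      · rintro ⟨s', ⟨x, hx, rfl⟩, rfl⟩
        refine ⟨x + (k:ℝ), ?_, ?_⟩
        · rw [← hplus]; exact ⟨x, hx, rfl⟩
        · have h1 := Aux9.itin_add H (hexZ x hx) (k:ℤ)
          rw [Int.cast_natCast] at h1
          rw [h1]
      · rintro ⟨x, hx, rfl⟩
        obtain ⟨x', hx', hxx⟩ : x ∈ (fun y => y + (k:ℝ)) '' Z' := by rw [hplus]; exact hx
        refine ⟨(Aux9.itin gt zmax zmin xmax) x', ⟨x', hx', rfl⟩, ?_⟩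
        have h1 := Aux9.itin_add H (hexZ x' hx') (k:ℤ)
        rw [Int.cast_natCast] at h1
        rw [← hxx]
        exact h1.symm
    · -- lex order preservation
      rintro s ⟨x, hx, rfl⟩ t ⟨y, hy, rfl⟩ hle
      rcases hle with he | hlt
      · exact Or.inl (congrArg shiftSeq he)
      · rcases lt_trichotomy x y with hxy | rfl | hxy
        · have h2 := hptwise (gt x) (hinv x hx) (gt y) (hinv y hy) (hord x hx y hy hxy)
          have h3 : lexLe ((Aux9.itin gt zmax zmin xmax) (gt x)) ((Aux9.itin gt zmax zmin xmax) (gt y)) := Aux9.lexLe_of_forall_le h2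
          rw [Aux9.itin_shift x, Aux9.itin_shift y]
          exact h3
        · exact absurd hlt (Aux9.lexLt_irrefl _)
        · obtain ⟨n, hpre, hn⟩ := hlt
          exact absurd hn (not_lt.mpr (hptwise y hy x hx (le_of_lt hxy) n))
    · -- projection equality
      ext s
      constructor
      · rintro ⟨s', ⟨x, hx, rfl⟩, rfl⟩
        exact ⟨mkk k x, hmemZ x hx, (hprojit x (hmemL x hx)).symm⟩
      · rintro ⟨z, hz, rfl⟩
        obtain ⟨x, hx, rfl⟩ : z ∈ mkk k '' Z' := by rw [himg]; exact hz
        exact ⟨(Aux9.itin gt zmax zmin xmax) x, ⟨x, hx, rfl⟩, hprojit x (hmemL x hx)⟩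
  · -- symbolic kfsm → physical kfsm
    rintro ⟨hsub, hshiftZ, W, hWOmega, hWshift, hWT, hWlex, hWproj⟩
    refine ⟨{x : ℝ | mkk k x ∈ Z ∧ (Aux9.itin gt zmax zmin xmax) x ∈ W}, ?_, ?_, ?_, ?_⟩
    · -- gt invariance
      rintro x ⟨hx1, hx2⟩
      refine ⟨?_, ?_⟩
      · show mkk k (gt x) ∈ Z
        rw [← hgk x]
        exact hZinv hx1
      · show (Aux9.itin gt zmax zmin xmax) (gt x) ∈ W
        rw [← Aux9.itin_shift x]
        exact hWshift hx2
    · -- translation invariance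
      ext x
      constructor
      · rintro ⟨x', ⟨hx1, hx2⟩, rfl⟩
        have hmq : mkk k (x' + (k:ℝ)) = mkk k x' := Aux9.mkk_eq_iff.mpr ⟨1, by push_cast; ring⟩
        refine ⟨?_, ?_⟩
        · show mkk k (x' + (k:ℝ)) ∈ Z
          rw [hmq]; exact hx1
        · show (Aux9.itin gt zmax zmin xmax) (x' + (k:ℝ)) ∈ W
          have h1 := Aux9.itin_add H (hex x' (hZsub hx1)) (k:ℤ)
          rw [Int.cast_natCast] at h1
          rw [h1, ← hWT]
          exact ⟨(Aux9.itin gt zmax zmin xmax) x', hx2, rfl⟩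
      · rintro ⟨hx1, hx2⟩
        have hW2 : (Aux9.itin gt zmax zmin xmax) x ∈ (fun s : ℕ → ℤ => fun n => s n + 2 * (k:ℤ)) '' W := by
          rw [hWT]; exact hx2
        obtain ⟨u, hu, hux⟩ := hW2
        have hmq : mkk k (x - (k:ℝ)) = mkk k x := Aux9.mkk_eq_iff.mpr ⟨-1, by push_cast; ring⟩
        have hexm : ∀ n, ∃ m : ℤ, gt^[n] (x - (k:ℝ)) ∈ addrI zmax zmin xmax m := by
          intro n
          obtain ⟨m, hm⟩ := hex x (hZsub hx1) n
          refine ⟨m + 2*(-(k:ℤ)), ?_⟩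
          have h2 := Aux9.mem_addrI_add (-(k:ℤ)) hm
          have h3 : gt^[n] (x - (k:ℝ)) = gt^[n] x + ((-(k:ℤ) : ℤ) : ℝ) := by
            rw [show x - (k:ℝ) = x + ((-(k:ℤ) : ℤ) : ℝ) by push_cast; ring,
              Aux9.gt_iter_add_int H]
          rw [h3]
          exact h2
        have h1 := Aux9.itin_add H hexm (k:ℤ)
        rw [Int.cast_natCast] at h1
        have hxk : x - (k:ℝ) + (k:ℝ) = x := by ring
        rw [hxk] at h1
        have hiu : (Aux9.itin gt zmax zmin xmax) (x - (k:ℝ)) = u := by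
          funext n
          have e1 := congrFun h1 n
          have e2 := congrFun hux n
          simp only at e1 e2
          omega
        refine ⟨x - (k:ℝ), ⟨?_, ?_⟩, by ring⟩
        · show mkk k (x - (k:ℝ)) ∈ Z
          rw [hmq]; exact hx1
        · show (Aux9.itin gt zmax zmin xmax) (x - (k:ℝ)) ∈ W
          rw [hiu]; exact hu
    · -- order preservation : the heart of the matter
      rintro x ⟨hxZ, hxW⟩ y ⟨hyZ, hyW⟩ hxy
      by_contra hcon
      push_neg at hcon
      have hmx : ∀ n, gt^[n] x ∈ addrI zmax zmin xmax ((Aux9.itin gt zmax zmin xmax) x n) :=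
        Aux9.itin_mem H (hex x (hZsub hxZ))
      have hmy : ∀ n, gt^[n] y ∈ addrI zmax zmin xmax ((Aux9.itin gt zmax zmin xmax) y n) :=
        Aux9.itin_mem H (hex y (hZsub hyZ))
      have hmx0 : x ∈ addrI zmax zmin xmax ((Aux9.itin gt zmax zmin xmax) x 0) := by
        have := hmx 0; rwa [Function.iterate_zero_apply] at this
      have hmy0 : y ∈ addrI zmax zmin xmax ((Aux9.itin gt zmax zmin xmax) y 0) := by
        have := hmy 0; rwa [Function.iterate_zero_apply] at this
      have h00 : (Aux9.itin gt zmax zmin xmax) x 0 ≤ (Aux9.itin gt zmax zmin xmax) y 0 :=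
        Aux9.addr_le hz0 hz1 hz2 H.hx1 hmx0 hmy0 (le_of_lt hxy)
      have hne0 : (Aux9.itin gt zmax zmin xmax) x 0 ≠ (Aux9.itin gt zmax zmin xmax) y 0 := by
        intro he
        have := Aux9.gt_lt_of_addr H hmx0 (by rw [← he] at hmy0; exact hmy0) hxy
        linarith
      have h0lt : (Aux9.itin gt zmax zmin xmax) x 0 < (Aux9.itin gt zmax zmin xmax) y 0 := lt_of_le_of_ne h00 hne0
      have HL : lexLe (shiftSeq ((Aux9.itin gt zmax zmin xmax) x)) (shiftSeq ((Aux9.itin gt zmax zmin xmax) y)) :=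
        hWlex ((Aux9.itin gt zmax zmin xmax) x) hxW ((Aux9.itin gt zmax zmin xmax) y) hyW (Or.inr (Aux9.lexLt_of_head h0lt))
      by_cases hAB : ∀ i, 1 ≤ i → (Aux9.itin gt zmax zmin xmax) x i = (Aux9.itin gt zmax zmin xmax) y i
      · -- equal itineraries forever : expansion contradiction
        refine Aux9.expansion_contra H hcon (m := fun n => (Aux9.itin gt zmax zmin xmax) y (n+1)) ?_ ?_
        · intro n
          have := hmy (n+1); rwa [Function.iterate_succ_apply] at this
        · intro n
          have := hmx (n+1); rw [Function.iterate_succ_apply] at this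
          rwa [hAB (n+1) (by omega)] at this
      · push_neg at hAB
        have hfind : ∃ i, 1 ≤ i ∧ (Aux9.itin gt zmax zmin xmax) x i ≠ (Aux9.itin gt zmax zmin xmax) y i := by
          obtain ⟨i0, hi0, hne⟩ := hAB; exact ⟨i0, hi0, hne⟩
        set n := Nat.find hfind with hn
        have hnspec := Nat.find_spec hfind
        have hnmin : ∀ l, 1 ≤ l → l < n → (Aux9.itin gt zmax zmin xmax) x l = (Aux9.itin gt zmax zmin xmax) y l := by
          intro l hl1 hl2
          have := Nat.find_min hfind hl2
          tauto
        have C1 : ∀ i, 1 ≤ i → i ≤ n → gt^[i] y < gt^[i] x := by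
          intro i
          induction i with
          | zero => intro h; exact absurd h (by omega)
          | succ i ih =>
            intro _ hsn
            rcases Nat.eq_zero_or_pos i with rfl | hip
            · simpa using hcon
            · have hprev : gt^[i] y < gt^[i] x := ih hip (by omega)
              have hsi : (Aux9.itin gt zmax zmin xmax) x i = (Aux9.itin gt zmax zmin xmax) y i := hnmin i hip (by omega)
              have h1 := hmx i
              rw [hsi] at h1
              have h2 := Aux9.gt_lt_of_addr H (hmy i) h1 hprev
              rw [Function.iterate_succ_apply', Function.iterate_succ_apply']
              exact h2
        have hfn : gt^[n] y < gt^[n] x := C1 n hnspec.1 (le_refl n)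
        have htn : (Aux9.itin gt zmax zmin xmax) y n ≤ (Aux9.itin gt zmax zmin xmax) x n :=
          Aux9.addr_le hz0 hz1 hz2 H.hx1 (hmy n) (hmx n) (le_of_lt hfn)
        have htn' : (Aux9.itin gt zmax zmin xmax) y n < (Aux9.itin gt zmax zmin xmax) x n := lt_of_le_of_ne htn (fun he => hnspec.2 he.symm)
        have hLT : lexLt (shiftSeq ((Aux9.itin gt zmax zmin xmax) y)) (shiftSeq ((Aux9.itin gt zmax zmin xmax) x)) := by
          refine ⟨n - 1, ?_, ?_⟩
          · intro i hi
            exact (hnmin (i+1) (by omega) (by omega)).symm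
          · show (Aux9.itin gt zmax zmin xmax) y (n-1+1) < (Aux9.itin gt zmax zmin xmax) x (n-1+1)
            rw [show n - 1 + 1 = n by omega]
            exact htn'
        rcases HL with he | hl
        · rw [he] at hLT
          exact Aux9.lexLt_irrefl _ hLT
        · exact Aux9.lexLt_asymm hl hLT
    · -- projection onto Z
      ext z
      constructor
      · rintro ⟨x, hx, rfl⟩
        exact hx.1
      · intro hzZ
        obtain ⟨x0, rfl⟩ := Aux9.mkk_surj z
        have hL : mkk k x0 ∈ LambdaK k gk zmax zmin xmax := hZsub hzZ
        have hex0 := hex x0 hL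
        have hp0 : projK k ((Aux9.itin gt zmax zmin xmax) x0) = ιk (mkk k x0) := hprojit x0 hL
        have hmem2 : ιk (mkk k x0) ∈ projK k '' W := by
          rw [hWproj]; exact ⟨mkk k x0, hzZ, rfl⟩
        obtain ⟨u, huW, hup⟩ := hmem2
        have h2kpos : (0:ℤ) < 2*(k:ℤ) := by positivity
        have hmod : ∀ n, u n % (2*(k:ℤ)) = (Aux9.itin gt zmax zmin xmax) x0 n % (2*(k:ℤ)) := by
          intro n
          have e1 := congrFun hup n
          have e2 := congrFun hp0 n
          have e3 : (u n % (2*(k:ℤ))).toNat = ((Aux9.itin gt zmax zmin xmax) x0 n % (2*(k:ℤ))).toNat := by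
            rw [show ((u n % (2*(k:ℤ))).toNat = projK k u n) from rfl,
              show (((Aux9.itin gt zmax zmin xmax) x0 n % (2*(k:ℤ))).toNat = projK k ((Aux9.itin gt zmax zmin xmax) x0) n) from rfl, e1, e2]
          have n1 := Int.emod_nonneg (u n) (ne_of_gt h2kpos)
          have n2 := Int.emod_nonneg ((Aux9.itin gt zmax zmin xmax) x0 n) (ne_of_gt h2kpos)
          omega
        have hrig := Aux9.seq_rigid hk (fun n => hWOmega huW n)
          (fun n => Aux9.itin_trans H hex0 n) hmod
        have hdvd : (2*(k:ℤ)) ∣ (u 0 - (Aux9.itin gt zmax zmin xmax) x0 0) :=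
          Int.dvd_of_emod_eq_zero (Int.emod_eq_emod_iff_emod_sub_eq_zero.mp (hmod 0))
        obtain ⟨q, hq⟩ := hdvd
        rw [show 2*(k:ℤ)*q = 2*(q*(k:ℤ)) by ring] at hq
        have h1 := Aux9.itin_add H hex0 (q*(k:ℤ))
        have hiu : (Aux9.itin gt zmax zmin xmax) (x0 + ((q*(k:ℤ) : ℤ) : ℝ)) = u := by
          rw [h1]
          funext n
          have := hrig n
          show Aux9.itin gt zmax zmin xmax x0 n + 2*(q*(k:ℤ)) = u n
          linarith
        refine ⟨x0 + ((q*(k:ℤ) : ℤ) : ℝ), ⟨?_, ?_⟩, ?_⟩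
        · show mkk k (x0 + ((q*(k:ℤ) : ℤ) : ℝ)) ∈ Z
          rw [Aux9.mkk_eq_iff.mpr ⟨q, by push_cast; ring⟩]
          exact hzZ
        · show (Aux9.itin gt zmax zmin xmax) (x0 + ((q*(k:ℤ) : ℤ) : ℝ)) ∈ W
          rw [hiu]; exact huW
        · exact Aux9.mkk_eq_iff.mpr ⟨q, by push_cast; ring⟩
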